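/- Under the hypotheses of the constrained minimization lemma, if moreover for all t ≥ 0 the set {x : g(x) = t·f(x)} has μ-measure zero, then any minimizer A of ∫_A g over sets with ∫_A f = c satisfies, up to μ-null sets, {g < t_c f} ⊆ A ⊆ {g ≤ t_c f}. -/
import Mathlib


open MeasureTheory Set

/-- Uniqueness part of the constrained minimization lemma: if for all `t ≥ 0` the set
`{g = t·f}` is `μ`-null, `t_c ≥ 0` is such that `A* = {g < t_c·f}` satisfies
`∫_{A*} f = c`, then any measurable minimizer `A` of `∫_A g` over sets with
`∫_A f = c` satisfies, up to `μ`-null sets, `{g < t_c f} ⊆ A ⊆ {g ≤ t_c f}`. -/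
theorem constrained_min_unique {𝓧 : Type*} [MeasurableSpace 𝓧]
    (μ : Measure 𝓧) (f g : 𝓧 → ℝ) (c : ℝ) (hc : 0 < c)
    (hf : Measurable f) (hg : Measurable g)
    (hf0 : ∀ x, 0 ≤ f x) (hg0 : ∀ x, 0 ≤ g x)
    (hfi : Integrable f μ) (hgi : Integrable g μ)
    (hnull : ∀ t : ℝ, 0 ≤ t → μ {x | g x = t * f x} = 0)
    (tc : ℝ) (htc : 0 ≤ tc)
    (hAstar : ∫ x in {x | g x < tc * f x}, f x ∂μ = c)
    (A : Set 𝓧) (hA : MeasurableSet A) (hAf : ∫ x in A, f x ∂μ = c)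
    (hAmin : ∀ B : Set 𝓧, MeasurableSet B → (∫ x in B, f x ∂μ) = c →
      (∫ x in A, g x ∂μ) ≤ ∫ x in B, g x ∂μ) :
    μ ({x | g x < tc * f x} \ A) = 0 ∧ μ (A \ {x | g x ≤ tc * f x}) = 0 := by
  set S : Set 𝓧 := {x | g x < tc * f x} with hSdef
  have hSm : MeasurableSet S := measurableSet_lt hg (measurable_const.mul hf)
  have h1 : ∫ x in A, g x ∂μ ≤ ∫ x in S, g x ∂μ := hAmin S hSm hAstar
  have hsfA : ∫ x in A ∩ S, f x ∂μ + ∫ x in A \ S, f x ∂μ = ∫ x in A, f x ∂μ :=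
    integral_inter_add_diff hSm hfi.integrableOn
  have hsfS : ∫ x in S ∩ A, f x ∂μ + ∫ x in S \ A, f x ∂μ = ∫ x in S, f x ∂μ :=
    integral_inter_add_diff hA hfi.integrableOn
  have hsgA : ∫ x in A ∩ S, g x ∂μ + ∫ x in A \ S, g x ∂μ = ∫ x in A, g x ∂μ :=
    integral_inter_add_diff hSm hgi.integrableOn
  have hsgS : ∫ x in S ∩ A, g x ∂μ + ∫ x in S \ A, g x ∂μ = ∫ x in S, g x ∂μ :=
    integral_inter_add_diff hA hgi.integrableOn
  have hcomm : A ∩ S = S ∩ A := inter_comm A S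
  have hIf : ∫ x in A \ S, f x ∂μ = ∫ x in S \ A, f x ∂μ := by
    rw [hcomm] at hsfA
    linarith
  have h2 : ∫ x in A \ S, g x ∂μ ≤ ∫ x in S \ A, g x ∂μ := by
    rw [hcomm] at hsgA; linarith
  -- on A \ S : tc * f ≤ g
  have h3 : tc * ∫ x in A \ S, f x ∂μ ≤ ∫ x in A \ S, g x ∂μ := by
    rw [← integral_const_mul]
    refine setIntegral_mono_on ((hfi.integrableOn).const_mul tc) hgi.integrableOn
      (hA.diff hSm) (fun x hx => ?_)
    have : ¬ g x < tc * f x := hx.2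
    linarith [not_lt.mp this]
  -- on S \ A : g ≤ tc * f
  have h4 : ∫ x in S \ A, g x ∂μ ≤ tc * ∫ x in S \ A, f x ∂μ := by
    rw [← integral_const_mul]
    refine setIntegral_mono_on hgi.integrableOn ((hfi.integrableOn).const_mul tc)
      (hSm.diff hA) (fun x hx => le_of_lt hx.1)
  have hIf' : tc * ∫ x in A \ S, f x ∂μ = tc * ∫ x in S \ A, f x ∂μ := by rw [hIf]
  have heq1 : ∫ x in S \ A, g x ∂μ = tc * ∫ x in S \ A, f x ∂μ := by linarith
  have heq2 : ∫ x in A \ S, g x ∂μ = tc * ∫ x in A \ S, f x ∂μ := by linarith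
  constructor
  · -- μ (S \ A) = 0
    by_contra hne
    have hposμ : 0 < μ (S \ A) := (pos_iff_ne_zero).mpr hne
    have hnn : 0 ≤ᵐ[μ.restrict (S \ A)] fun x => tc * f x - g x := by
      filter_upwards [ae_restrict_mem (hSm.diff hA)] with x hx
      exact le_of_lt (sub_pos.mpr hx.1)
    have hint : IntegrableOn (fun x => tc * f x - g x) (S \ A) μ :=
      ((hfi.integrableOn).const_mul tc).sub hgi.integrableOn
    have hI0 : ∫ x in S \ A, (tc * f x - g x) ∂μ = 0 := by
      rw [integral_sub ((hfi.integrableOn).const_mul tc) hgi.integrableOn,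
        integral_const_mul]
      linarith
    have := (setIntegral_pos_iff_support_of_nonneg_ae hnn hint).mpr ?_
    · linarith [hI0, this]
    · refine lt_of_lt_of_le hposμ (measure_mono ?_)
      intro x hx
      refine ⟨?_, hx⟩
      have : 0 < tc * f x - g x := sub_pos.mpr hx.1
      simp [Function.support, ne_of_gt this]
  · -- μ (A \ {g ≤ tc f}) = 0
    have hnn : 0 ≤ᵐ[μ.restrict (A \ S)] fun x => g x - tc * f x := by
      filter_upwards [ae_restrict_mem (hA.diff hSm)] with x hx
      exact sub_nonneg.mpr (not_lt.mp hx.2)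
    have hint : Integrable (fun x => g x - tc * f x) (μ.restrict (A \ S)) :=
      hgi.integrableOn.sub ((hfi.integrableOn).const_mul tc)
    have hI0 : ∫ x in A \ S, (g x - tc * f x) ∂μ = 0 := by
      rw [integral_sub hgi.integrableOn ((hfi.integrableOn).const_mul tc),
        integral_const_mul]
      linarith
    have hae : (fun x => g x - tc * f x) =ᵐ[μ.restrict (A \ S)] 0 :=
      (integral_eq_zero_iff_of_nonneg_ae hnn hint).mp hI0
    have hmeas : MeasurableSet {x | g x - tc * f x ≠ 0} :=
      (measurableSet_eq_fun (hg.sub (measurable_const.mul hf)) measurable_const).compl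
    have hr : μ ({x | g x - tc * f x ≠ 0} ∩ (A \ S)) = 0 := by
      have h2' : μ.restrict (A \ S) {x | g x - tc * f x ≠ 0} = 0 := by
        have := ae_iff.mp hae
        simpa using this
      rwa [Measure.restrict_apply hmeas] at h2'
    have hAS0 : μ (A \ S) = 0 := by
      have hsub : A \ S ⊆ ({x | g x - tc * f x ≠ 0} ∩ (A \ S)) ∪ {x | g x = tc * f x} := by
        intro x hx
        by_cases h : g x - tc * f x = 0
        · exact Or.inr (by simpa [sub_eq_zero] using h)
        · exact Or.inl ⟨h, hx⟩
      exact measure_mono_null hsub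
        (measure_union_null hr (hnull tc htc))
    refine measure_mono_null ?_ hAS0
    intro x hx
    exact ⟨hx.1, fun (h : g x < tc * f x) => hx.2 h.le⟩
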